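/- arXiv:2604.26744 — 2 statements merged into one kernel-verified Lean document; each statement's English description precedes it below -/
import Mathlib

section
/- Lagrangian preservation (other direction): if φ is sufficient for C given T, then for every β ≥ 0 and every encoder p(X|T) satisfying C ↔ T ↔ X, the marginalised encoder q(x|z) := Σ_t p(x|t)p(t|φ=z) satisfies I_p(X;T) − β·I_p(X;C) ≥ I_q(X;φ(T)) − β·I_q(X;C). Consequently the two Lagrangian infima are equal. -/
open scoped BigOperators

/-- Finite-alphabet mutual information of a joint distribution `p` on `A × B`. -/
noncomputable def mi {A B : Type*} [Fintype A] [Fintype B] (p : A → B → ℝ) : ℝ :=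
  ∑ a, ∑ b, p a b * Real.log (p a b / ((∑ b', p a b') * (∑ a', p a' b)))

/-- Finite-alphabet conditional mutual information `I(A;B∣Z)` of a joint on `A × B × Z`. -/
noncomputable def cmi {A B Z : Type*} [Fintype A] [Fintype B] [Fintype Z]
    (p : A → B → Z → ℝ) : ℝ :=
  ∑ z, ∑ a, ∑ b, p a b z *
    Real.log ((p a b z * (∑ a', ∑ b', p a' b' z)) /
      ((∑ b', p a b' z) * (∑ a', p a' b z)))

/-- `A` and `B` are conditionally independent given `Z` (Markov chain `A ↔ Z ↔ B`),
for a joint distribution `p` on `A × B × Z`. -/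
def CondIndep {A B Z : Type*} [Fintype A] [Fintype B] (p : A → B → Z → ℝ) : Prop :=
  ∀ a b z, p a b z * (∑ a', ∑ b', p a' b' z) = (∑ b', p a b' z) * (∑ a', p a' b z)

/-- A stochastic kernel (each row nonnegative and summing to one). -/
def IsKernel {A B : Type*} [Fintype B] (q : A → B → ℝ) : Prop :=
  (∀ a b, 0 ≤ q a b) ∧ ∀ a, ∑ b, q a b = 1

/-- The IB Lagrangian `I(X;T) − β·I(X;C)` of an encoder `e = p(X∣T)` for the joint
`p` on `T × C`, computed under the induced joint `p(t,c)·e(x∣t)`. -/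
noncomputable def fullLag {T C X : Type*} [Fintype T] [Fintype C] [Fintype X]
    (p : T → C → ℝ) (β : ℝ) (e : T → X → ℝ) : ℝ :=
  mi (fun t x => (∑ c, p t c) * e t x) - β * mi (fun c x => ∑ t, p t c * e t x)

/-- The pushforward joint of `(φ(T), C)`. -/
noncomputable def pushJoint {T C Z : Type*} [Fintype T] [DecidableEq Z]
    (p : T → C → ℝ) (φ : T → Z) (z : Z) (c : C) : ℝ :=
  ∑ t, if φ t = z then p t c else 0

/-- The marginalised encoder `q(x∣z) := Σ_t p(x∣t) p(t∣φ=z)`, written without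
conditionals as a ratio of marginals of the induced joint `p(t,c)·e(x∣t)`. -/
noncomputable def margEnc {T C Z X : Type*} [Fintype T] [Fintype C] [DecidableEq Z]
    (p : T → C → ℝ) (φ : T → Z) (e : T → X → ℝ) (x : X) (z : Z) : ℝ :=
  (∑ t, if φ t = z then (∑ c, p t c) * e t x else 0) /
    (∑ t, if φ t = z then (∑ c, p t c) else 0)

private lemma log_sum {ι : Type*} (s : Finset ι) (a b : ι → ℝ)
    (ha : ∀ i ∈ s, 0 ≤ a i) (hb : ∀ i ∈ s, 0 ≤ b i)
    (hab : ∀ i ∈ s, b i = 0 → a i = 0) :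
    (∑ i ∈ s, a i) * Real.log ((∑ i ∈ s, a i) / (∑ i ∈ s, b i)) ≤
      ∑ i ∈ s, a i * Real.log (a i / b i) := by
  rcases eq_or_lt_of_le (Finset.sum_nonneg ha) with h0 | hApos
  · have hz : ∀ i ∈ s, a i = 0 :=
      (Finset.sum_eq_zero_iff_of_nonneg ha).mp h0.symm
    have h1 : ∑ i ∈ s, a i * Real.log (a i / b i) = 0 :=
      Finset.sum_eq_zero fun i hi => by rw [hz i hi]; ring
    rw [h1, ← h0]
    simp
  · have hBpos : 0 < ∑ i ∈ s, b i := by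
      rcases eq_or_lt_of_le (Finset.sum_nonneg hb) with h0 | h
      · exfalso
        have hbz : ∀ i ∈ s, b i = 0 :=
          (Finset.sum_eq_zero_iff_of_nonneg hb).mp h0.symm
        have : ∑ i ∈ s, a i = 0 := Finset.sum_eq_zero fun i hi => hab i hi (hbz i hi)
        linarith
      · exact h
    set A := ∑ i ∈ s, a i with hA
    set B := ∑ i ∈ s, b i with hB
    have key : ∀ i ∈ s, a i * Real.log (A / B) + (a i - A * b i / B)
        ≤ a i * Real.log (a i / b i) := by
      intro i hi
      rcases eq_or_lt_of_le (ha i hi) with h | h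
      · rw [← h]
        have : 0 ≤ A * b i / B := by
          apply div_nonneg _ hBpos.le
          exact mul_nonneg hApos.le (hb i hi)
        simp
        linarith
      · have hbi : 0 < b i := by
          rcases eq_or_lt_of_le (hb i hi) with h' | h'
          · exact absurd (hab i hi h'.symm) (ne_of_gt h)
          · exact h'
        have h1 : Real.log (a i / b i) = Real.log (A / B) + Real.log ((a i * B) / (b i * A)) := by
          rw [Real.log_div h.ne' hbi.ne', Real.log_div hApos.ne' hBpos.ne',
            Real.log_div (mul_pos h hBpos).ne' (mul_pos hbi hApos).ne',
            Real.log_mul h.ne' hBpos.ne', Real.log_mul hbi.ne' hApos.ne']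
          ring
        have h2 : 1 - (b i * A) / (a i * B) ≤ Real.log ((a i * B) / (b i * A)) := by
          have hle := Real.log_le_sub_one_of_pos (div_pos (mul_pos hbi hApos) (mul_pos h hBpos))
          have hinv : Real.log ((a i * B) / (b i * A)) = -Real.log ((b i * A) / (a i * B)) := by
            rw [← Real.log_inv]
            congr 1
            field_simp
          linarith
        have h3 : a i * (1 - (b i * A) / (a i * B)) = a i - A * b i / B := by
          field_simp
        have h4 := mul_le_mul_of_nonneg_left h2 h.le
        rw [h3] at h4
        rw [h1, mul_add]
        linarith
    calc A * Real.log (A / B)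
        = ∑ i ∈ s, (a i * Real.log (A / B) + (a i - A * b i / B)) := by
          rw [Finset.sum_add_distrib, ← Finset.sum_mul, ← hA, Finset.sum_sub_distrib]
          have h5 : ∑ x ∈ s, A * b x / B = A := by
            rw [← Finset.sum_div, ← Finset.mul_sum, ← hB, mul_div_assoc,
              div_self hBpos.ne', mul_one]
          rw [h5, ← hA]
          ring
      _ ≤ ∑ i ∈ s, a i * Real.log (a i / b i) := Finset.sum_le_sum key

private lemma mi_nonneg {A B : Type*} [Fintype A] [Fintype B] (p : A → B → ℝ)
    (hp : ∀ a b, 0 ≤ p a b) (h1 : ∑ a, ∑ b, p a b = 1) : 0 ≤ mi p := by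
  have key := log_sum (Finset.univ : Finset (A × B)) (fun ab => p ab.1 ab.2)
    (fun ab => (∑ b', p ab.1 b') * (∑ a', p a' ab.2))
    (fun i _ => hp i.1 i.2)
    (fun i _ => mul_nonneg (Finset.sum_nonneg fun _ _ => hp _ _)
      (Finset.sum_nonneg fun _ _ => hp _ _))
    (fun i _ hz => by
      rcases mul_eq_zero.mp hz with h | h
      · have hle : p i.1 i.2 ≤ ∑ b', p i.1 b' :=
          Finset.single_le_sum (fun b _ => hp i.1 b) (Finset.mem_univ i.2)
        exact le_antisymm (h ▸ hle) (hp i.1 i.2)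
      · have hle : p i.1 i.2 ≤ ∑ a', p a' i.2 :=
          Finset.single_le_sum (fun a _ => hp a i.2) (Finset.mem_univ i.1)
        exact le_antisymm (h ▸ hle) (hp i.1 i.2))
  have hA : ∑ i : A × B, p i.1 i.2 = 1 := by
    rw [Fintype.sum_prod_type]; exact h1
  have hB : ∑ i : A × B, (∑ b', p i.1 b') * (∑ a', p a' i.2) = 1 := by
    rw [Fintype.sum_prod_type]
    have : ∀ a : A, ∑ b : B, (∑ b', p a b') * (∑ a', p a' b)
        = (∑ b', p a b') * ∑ b, ∑ a', p a' b := fun a => by rw [Finset.mul_sum]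
    rw [Finset.sum_congr rfl fun a _ => this a, ← Finset.sum_mul, h1, one_mul,
      Finset.sum_comm, h1]
  rw [hA, hB] at key
  simp only [div_one, Real.log_one, mul_zero] at key
  calc (0:ℝ) = 1 * Real.log 1 := by simp
    _ ≤ _ := by
      rw [Real.log_one, mul_zero]
      refine le_trans key ?_
      rw [mi, Fintype.sum_prod_type]

private lemma mi_le_card {A B : Type*} [Fintype A] [Fintype B] (p : A → B → ℝ)
    (hp : ∀ a b, 0 ≤ p a b) : mi p ≤ Fintype.card B := by
  rw [mi, Finset.sum_comm]
  have hbd : ∀ b : B, ∑ a, p a b * Real.log (p a b / ((∑ b', p a b') * (∑ a', p a' b))) ≤ 1 := by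
    intro b
    set cb := ∑ a', p a' b with hcb
    have hcbnn : 0 ≤ cb := Finset.sum_nonneg fun _ _ => hp _ _
    rcases eq_or_lt_of_le hcbnn with h0 | hcbpos
    · have hz : ∀ a, p a b = 0 := fun a =>
        le_antisymm (h0 ▸ Finset.single_le_sum (fun a _ => hp a b) (Finset.mem_univ a)) (hp a b)
      have : ∑ a, p a b * Real.log (p a b / ((∑ b', p a b') * cb)) = 0 :=
        Finset.sum_eq_zero fun a _ => by rw [hz a]; ring
      rw [this]; norm_num
    · have hterm : ∀ a : A, p a b * Real.log (p a b / ((∑ b', p a b') * cb)) ≤ p a b / cb := by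
        intro a
        rcases eq_or_lt_of_le (hp a b) with h0 | hpab
        · rw [← h0]; simp
        · have hra : 0 < ∑ b', p a b' :=
            lt_of_lt_of_le hpab (Finset.single_le_sum (fun b' _ => hp a b') (Finset.mem_univ b))
          have hx : (0:ℝ) < p a b / ((∑ b', p a b') * cb) := by positivity
          have hlog := Real.log_le_sub_one_of_pos hx
          have h2 : p a b * Real.log (p a b / ((∑ b', p a b') * cb))
              ≤ p a b * (p a b / ((∑ b', p a b') * cb)) := by nlinarith
          refine h2.trans ?_
          have hple : p a b ≤ ∑ b', p a b' :=
            Finset.single_le_sum (fun b' _ => hp a b') (Finset.mem_univ b)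
          have e1 : p a b * (p a b / ((∑ b', p a b') * cb))
              = (p a b * p a b) / ((∑ b', p a b') * cb) := by ring
          have e2 : p a b / cb = (p a b * (∑ b', p a b')) / ((∑ b', p a b') * cb) := by
            rw [mul_comm (p a b), mul_div_mul_left _ _ hra.ne']
          rw [e1, e2]
          gcongr
      calc ∑ a, p a b * Real.log (p a b / ((∑ b', p a b') * cb)) ≤ ∑ a, p a b / cb :=
            Finset.sum_le_sum fun a _ => hterm a
        _ = 1 := by rw [← Finset.sum_div, ← hcb, div_self hcbpos.ne']
  calc ∑ b, ∑ a, p a b * Real.log (p a b / ((∑ b', p a b') * (∑ a', p a' b)))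
      ≤ ∑ _b : B, (1:ℝ) := Finset.sum_le_sum fun b _ => hbd b
    _ = Fintype.card B := by simp

private lemma mi_group {T X Z : Type*} [Fintype T] [Fintype X] [Fintype Z] [DecidableEq Z]
    (r : T → X → ℝ) (hr : ∀ t x, 0 ≤ r t x) (φ : T → Z) :
    mi (fun z x => ∑ t, if φ t = z then r t x else 0) ≤ mi r := by
  set s : Z → X → ℝ := fun z x => ∑ t, if φ t = z then r t x else 0 with hs
  have hsX : ∀ x, ∑ z, s z x = ∑ t, r t x := by
    intro x
    rw [hs]
    rw [Finset.sum_comm]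
    exact Finset.sum_congr rfl fun t _ => by simp
  have hsZ : ∀ z, ∑ x, s z x = ∑ t, if φ t = z then (∑ x, r t x) else 0 := by
    intro z
    rw [hs, Finset.sum_comm]
    exact Finset.sum_congr rfl fun t _ => by split <;> simp
  have key : ∀ z x, s z x * Real.log (s z x / ((∑ x', s z x') * (∑ z', s z' x)))
      ≤ ∑ t ∈ Finset.univ.filter (fun t => φ t = z),
          r t x * Real.log (r t x / ((∑ x', r t x') * (∑ t', r t' x))) := by
    intro z x
    have happ := log_sum (Finset.univ.filter (fun t => φ t = z))
      (fun t => r t x) (fun t => (∑ x', r t x') * (∑ t', r t' x))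
      (fun t _ => hr t x)
      (fun t _ => mul_nonneg (Finset.sum_nonneg fun _ _ => hr _ _)
        (Finset.sum_nonneg fun _ _ => hr _ _))
      (fun t _ hz => by
        rcases mul_eq_zero.mp hz with h | h
        · exact le_antisymm (h ▸ Finset.single_le_sum (fun x' _ => hr t x') (Finset.mem_univ x)) (hr t x)
        · exact le_antisymm (h ▸ Finset.single_le_sum (fun t' _ => hr t' x) (Finset.mem_univ t)) (hr t x))
    have e1 : ∑ t ∈ Finset.univ.filter (fun t => φ t = z), r t x = s z x := by
      rw [hs, Finset.sum_filter]
    have e2 : ∑ t ∈ Finset.univ.filter (fun t => φ t = z),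
        (∑ x', r t x') * (∑ t', r t' x) = (∑ x', s z x') * (∑ z', s z' x) := by
      rw [← Finset.sum_mul, Finset.sum_filter, ← hsZ z, hsX x]
    rw [e1, e2] at happ
    exact happ
  calc mi s = ∑ z, ∑ x, s z x * Real.log (s z x / ((∑ x', s z x') * (∑ z', s z' x))) := rfl
    _ ≤ ∑ z, ∑ x, ∑ t ∈ Finset.univ.filter (fun t => φ t = z),
          r t x * Real.log (r t x / ((∑ x', r t x') * (∑ t', r t' x))) :=
        Finset.sum_le_sum fun z _ => Finset.sum_le_sum fun x _ => key z x
    _ = mi r := by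
        rw [mi]
        rw [Finset.sum_congr rfl fun z (_ : z ∈ Finset.univ) => Finset.sum_comm]
        rw [Finset.sum_fiberwise_of_maps_to (fun t _ => Finset.mem_univ (φ t))]

private lemma regroup {T Z : Type*} [Fintype T] [Fintype Z] [DecidableEq Z] (φ : T → Z)
    (u : T → ℝ) (v : Z → ℝ) :
    ∑ z, (∑ t, if φ t = z then u t else 0) * v z = ∑ t, u t * v (φ t) := by
  have h : ∀ z, (∑ t, if φ t = z then u t else 0) * v z
      = ∑ t, if φ t = z then u t * v z else 0 := by
    intro z
    rw [Finset.sum_mul]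
    exact Finset.sum_congr rfl fun t _ => by split <;> simp
  rw [Finset.sum_congr rfl fun z (_ : z ∈ Finset.univ) => h z, Finset.sum_comm]
  exact Finset.sum_congr rfl fun t _ => by simp

private lemma mi_factor {T X Z : Type*} [Fintype T] [Fintype X] [Fintype Z] [DecidableEq Z]
    (w : T → ℝ) (f : Z → X → ℝ) (φ : T → Z) :
    mi (fun t x => w t * f (φ t) x)
      = mi (fun z x => (∑ t, if φ t = z then w t else 0) * f z x) := by
  set W : Z → ℝ := fun z => ∑ t, if φ t = z then w t else 0 with hW
  set S : Z → ℝ := fun z => ∑ x, f z x with hS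
  set rX : X → ℝ := fun x => ∑ t, w t * f (φ t) x with hrX
  have hrXW : ∀ x, ∑ z, W z * f z x = rX x := fun x => regroup φ w (fun z => f z x)
  set g : Z → X → ℝ := fun z x => f z x * Real.log (f z x / (S z * rX x)) with hg
  have hrow : ∀ t, ∑ x, w t * f (φ t) x = w t * S (φ t) := fun t => by
    rw [hS, ← Finset.mul_sum]
  have hterm : ∀ t x, (w t * f (φ t) x) *
      Real.log ((w t * f (φ t) x) / ((∑ x', w t * f (φ t) x') * rX x))
      = w t * g (φ t) x := by
    intro t x
    rcases eq_or_ne (w t) 0 with h | h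
    · rw [h]; ring
    · rw [hrow t, hg]
      have : (w t * f (φ t) x) / ((w t * S (φ t)) * rX x)
          = f (φ t) x / (S (φ t) * rX x) := by
        rw [mul_assoc, mul_div_mul_left _ _ h]
      rw [this]; ring
  have htermW : ∀ z x, (W z * f z x) *
      Real.log ((W z * f z x) / ((∑ x', W z * f z x') * rX x))
      = W z * g z x := by
    intro z x
    rcases eq_or_ne (W z) 0 with h | h
    · rw [h]; ring
    · have hrow' : ∑ x', W z * f z x' = W z * S z := by rw [hS, ← Finset.mul_sum]
      rw [hrow', hg]
      have : (W z * f z x) / ((W z * S z) * rX x) = f z x / (S z * rX x) := by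
        rw [mul_assoc, mul_div_mul_left _ _ h]
      rw [this]; ring
  have lhs_eq : mi (fun t x => w t * f (φ t) x) = ∑ t, ∑ x, w t * g (φ t) x := by
    rw [mi]
    refine Finset.sum_congr rfl fun t _ => Finset.sum_congr rfl fun x _ => ?_
    have hcol : ∑ t', w t' * f (φ t') x = rX x := rfl
    rw [hcol]
    exact hterm t x
  have rhs_eq : mi (fun z x => W z * f z x) = ∑ z, ∑ x, W z * g z x := by
    rw [mi]
    refine Finset.sum_congr rfl fun z _ => Finset.sum_congr rfl fun x _ => ?_
    have hcol : ∑ z', W z' * f z' x = rX x := hrXW x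
    rw [hcol]
    exact htermW z x
  rw [lhs_eq, rhs_eq, Finset.sum_comm]
  conv_rhs => rw [Finset.sum_comm]
  refine Finset.sum_congr rfl fun x _ => ?_
  exact (regroup φ w (fun z => g z x)).symm

private lemma fullLag_lb {T C X : Type*} [Fintype T] [Fintype C] [Fintype X]
    (p : T → C → ℝ) (β : ℝ) (hβ : 0 ≤ β)
    (hpos : ∀ t c, 0 ≤ p t c) (hsum : ∑ t, ∑ c, p t c = 1)
    (e : T → X → ℝ) (he : IsKernel e) :
    -(β * Fintype.card X) ≤ fullLag p β e := by
  rw [fullLag]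
  have h1 : 0 ≤ mi (fun t x => (∑ c, p t c) * e t x) := by
    apply mi_nonneg
    · intro t x
      exact mul_nonneg (Finset.sum_nonneg fun _ _ => hpos _ _) (he.1 t x)
    · have : ∀ t : T, ∑ x : X, (∑ c, p t c) * e t x = ∑ c, p t c := fun t => by
        rw [← Finset.mul_sum, he.2 t, mul_one]
      rw [Finset.sum_congr rfl fun t _ => this t, hsum]
  have h2 : mi (fun c x => ∑ t, p t c * e t x) ≤ Fintype.card X :=
    mi_le_card _ fun c x => Finset.sum_nonneg fun t _ => mul_nonneg (hpos t c) (he.1 t x)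
  have h3 : β * mi (fun c x => ∑ t, p t c * e t x) ≤ β * Fintype.card X :=
    mul_le_mul_of_nonneg_left h2 hβ
  linarith

/-- Lagrangian preservation (other direction): if `φ` is
sufficient for `C` given `T`, every encoder `p(X∣T)` dominates its marginalisation
`q(x∣z) := Σ_t p(x∣t)p(t∣φ=z)` in Lagrangian value, and consequently the two
Lagrangian infima are equal. -/
theorem stmt10 {T C Z X : Type*} [Fintype T] [Fintype C] [Fintype Z] [DecidableEq Z]
    [Fintype X] [Nonempty X]
    (φ : T → Z) (p : T → C → ℝ) (β : ℝ) (hβ : 0 ≤ β)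
    (hpos : ∀ t c, 0 ≤ p t c)
    (hsum : ∑ t, ∑ c, p t c = 1)
    (hsuff : CondIndep (fun c t z => if φ t = z then p t c else 0)) :
    (∀ e : T → X → ℝ, IsKernel e →
      mi (fun z x => (∑ c, pushJoint p φ z c) * margEnc p φ e x z)
        - β * mi (fun c x => ∑ z, pushJoint p φ z c * margEnc p φ e x z)
        ≤ fullLag p β e) ∧
    sInf {v : ℝ | ∃ e : T → X → ℝ, IsKernel e ∧ v = fullLag p β e} =
      sInf {v : ℝ | ∃ f : Z → X → ℝ, IsKernel f ∧ v = fullLag (pushJoint p φ) β f} := by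
  classical
  -- notation and basic facts
  have hpush_def : ∀ z c, pushJoint p φ z c = ∑ t, if φ t = z then p t c else 0 :=
    fun _ _ => rfl
  have hpT_nn : ∀ t, 0 ≤ ∑ c, p t c := fun t => Finset.sum_nonneg fun _ _ => hpos t _
  have hpush_nn : ∀ z c, 0 ≤ pushJoint p φ z c := by
    intro z c
    rw [hpush_def]
    exact Finset.sum_nonneg fun t _ => by split <;> [exact hpos t c; exact le_rfl]
  -- MZ z = ∑_c pushJoint z c = ∑_{t : φ t = z} pT t
  have hMZ : ∀ z, (∑ c, pushJoint p φ z c) = ∑ t, if φ t = z then (∑ c, p t c) else 0 := by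
    intro z
    simp only [hpush_def]
    rw [Finset.sum_comm]
    exact Finset.sum_congr rfl fun t _ => by split <;> simp
  have hMZ_nn : ∀ z, 0 ≤ ∑ t, if φ t = z then (∑ c, p t c) else 0 := by
    intro z
    exact Finset.sum_nonneg fun t _ => by split <;> [exact hpT_nn t; exact le_rfl]
  have hfiber0 : ∀ z, (∑ t, if φ t = z then (∑ c, p t c) else 0) = 0 →
      ∀ t, φ t = z → (∑ c, p t c) = 0 := by
    intro z hz t ht
    have := (Finset.sum_eq_zero_iff_of_nonneg
      (fun t _ => by split <;> [exact hpT_nn t; exact le_rfl])).mp hz t (Finset.mem_univ t)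
    rwa [if_pos ht] at this
  have hptc_le : ∀ t c, p t c ≤ ∑ c', p t c' := fun t c =>
    Finset.single_le_sum (fun c' _ => hpos t c') (Finset.mem_univ c)
  have hpush0 : ∀ z, (∑ t, if φ t = z then (∑ c, p t c) else 0) = 0 →
      ∀ c, pushJoint p φ z c = 0 := by
    intro z hz c
    rw [hpush_def]
    apply Finset.sum_eq_zero
    intro t _
    split
    · next ht =>
      have h0 := hfiber0 z hz t ht
      exact le_antisymm (h0 ▸ hptc_le t c) (hpos t c)
    · rfl
  -- sufficiency consequence
  have hS : ∀ t c, p t c * (∑ t', if φ t' = φ t then (∑ c', p t' c') else 0)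
      = pushJoint p φ (φ t) c * (∑ c', p t c') := by
    intro t c
    have h := hsuff c t (φ t)
    simp only [eq_self_iff_true, if_true] at h
    have hmid : (∑ a', ∑ b', if φ b' = φ t then p b' a' else 0)
        = ∑ t', if φ t' = φ t then (∑ c', p t' c') else 0 := by
      rw [Finset.sum_comm]
      exact Finset.sum_congr rfl fun t' _ => by split <;> simp
    rw [hmid] at h
    rw [hpush_def]
    exact h
  -- margEnc rewriting
  have hmarg : ∀ (e : T → X → ℝ) x z, margEnc p φ e x z
      = (∑ t, if φ t = z then (∑ c, p t c) * e t x else 0)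
        / (∑ t, if φ t = z then (∑ c, p t c) else 0) := fun _ _ _ => rfl
  -- the key pointwise identities for an arbitrary kernel e
  have hN0 : ∀ (e : T → X → ℝ), IsKernel e → ∀ z x,
      (∑ t, if φ t = z then (∑ c, p t c) else 0) = 0 →
      (∑ t, if φ t = z then (∑ c, p t c) * e t x else 0) = 0 := by
    intro e he z x hz
    apply Finset.sum_eq_zero
    intro t _
    split
    · next ht => rw [hfiber0 z hz t ht, zero_mul]
    · rfl
  have E1 : ∀ (e : T → X → ℝ), IsKernel e →
      (fun z x => (∑ c, pushJoint p φ z c) * margEnc p φ e x z)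
        = fun z x => ∑ t, if φ t = z then (∑ c, p t c) * e t x else 0 := by
    intro e he
    funext z x
    rw [hMZ z, hmarg]
    rcases eq_or_ne (∑ t, if φ t = z then (∑ c, p t c) else 0) 0 with h | h
    · rw [h, hN0 e he z x h]
      simp
    · rw [mul_comm, div_mul_cancel₀ _ h]
  have E2 : ∀ (e : T → X → ℝ), IsKernel e →
      (fun c x => ∑ z, pushJoint p φ z c * margEnc p φ e x z)
        = fun c x => ∑ t, p t c * e t x := by
    intro e he
    funext c x
    have per : ∀ z, pushJoint p φ z c * margEnc p φ e x z
        = ∑ t, if φ t = z then p t c * e t x else 0 := by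
      intro z
      rw [hmarg]
      rcases eq_or_ne (∑ t, if φ t = z then (∑ c, p t c) else 0) 0 with h | h
      · rw [hpush0 z h c, zero_mul]
        symm
        apply Finset.sum_eq_zero
        intro t _
        split
        · next ht =>
          have h0 := hfiber0 z h t ht
          have : p t c = 0 := le_antisymm (h0 ▸ hptc_le t c) (hpos t c)
          rw [this, zero_mul]
        · rfl
      · -- nonzero fiber mass
        have hnum : (∑ t, if φ t = z then (∑ c, p t c) * e t x else 0) * pushJoint p φ z c
            = (∑ t, if φ t = z then (∑ c, p t c) else 0)
              * ∑ t, if φ t = z then p t c * e t x else 0 := by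
          rw [Finset.sum_mul, Finset.mul_sum]
          refine Finset.sum_congr rfl fun t _ => ?_
          split
          · next ht =>
            have hkey := hS t c
            rw [ht] at hkey
            calc (∑ c', p t c') * e t x * pushJoint p φ z c
                = (pushJoint p φ z c * (∑ c', p t c')) * e t x := by ring
              _ = (p t c * (∑ t', if φ t' = z then (∑ c', p t' c') else 0)) * e t x := by
                  rw [← hkey]
              _ = (∑ t', if φ t' = z then (∑ c', p t' c') else 0) * (p t c * e t x) := by ring
          · rw [zero_mul, mul_zero]
        calc pushJoint p φ z c
              * ((∑ t, if φ t = z then (∑ c, p t c) * e t x else 0)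
                / (∑ t, if φ t = z then (∑ c, p t c) else 0))
            = ((∑ t, if φ t = z then (∑ c, p t c) * e t x else 0) * pushJoint p φ z c)
              / (∑ t, if φ t = z then (∑ c, p t c) else 0) := by ring
          _ = ((∑ t, if φ t = z then (∑ c, p t c) else 0)
                * ∑ t, if φ t = z then p t c * e t x else 0)
              / (∑ t, if φ t = z then (∑ c, p t c) else 0) := by rw [hnum]
          _ = ∑ t, if φ t = z then p t c * e t x else 0 := by
              rw [mul_div_assoc, mul_comm]
              exact div_mul_cancel₀ _ h
    rw [Finset.sum_congr rfl fun z (_ : z ∈ Finset.univ) => per z, Finset.sum_comm]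
    exact Finset.sum_congr rfl fun t _ => by simp
  -- Part 1
  have part1 : ∀ e : T → X → ℝ, IsKernel e →
      mi (fun z x => (∑ c, pushJoint p φ z c) * margEnc p φ e x z)
        - β * mi (fun c x => ∑ z, pushJoint p φ z c * margEnc p φ e x z)
        ≤ fullLag p β e := by
    intro e he
    rw [E1 e he, E2 e he, fullLag]
    have hmono := mi_group (fun t x => (∑ c, p t c) * e t x)
      (fun t x => mul_nonneg (hpT_nn t) (he.1 t x)) φ
    exact sub_le_sub_right hmono _
  refine ⟨part1, ?_⟩
  -- Part 2 : equality of infima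
  have hcardX : (0:ℝ) < Fintype.card X := by
    exact_mod_cast Fintype.card_pos
  have hunif : IsKernel (fun (_ : Z) (_ : X) => (Fintype.card X : ℝ)⁻¹) := by
    constructor
    · intro _ _; positivity
    · intro _; rw [Finset.sum_const, nsmul_eq_mul, Finset.card_univ, mul_inv_cancel₀ hcardX.ne']
  have hunifT : IsKernel (fun (_ : T) (_ : X) => (Fintype.card X : ℝ)⁻¹) := by
    constructor
    · intro _ _; positivity
    · intro _; rw [Finset.sum_const, nsmul_eq_mul, Finset.card_univ, mul_inv_cancel₀ hcardX.ne']
  set F := {v : ℝ | ∃ e : T → X → ℝ, IsKernel e ∧ v = fullLag p β e} with hF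
  set R := {v : ℝ | ∃ f : Z → X → ℝ, IsKernel f ∧ v = fullLag (pushJoint p φ) β f} with hR
  have hFne : F.Nonempty := ⟨_, _, hunifT, rfl⟩
  have hRne : R.Nonempty := ⟨_, _, hunif, rfl⟩
  -- pushJoint is a distribution
  have hpushsum : ∑ z, ∑ c, pushJoint p φ z c = 1 := by
    rw [Finset.sum_congr rfl fun z (_ : z ∈ Finset.univ) => hMZ z, Finset.sum_comm]
    rw [← hsum]
    exact Finset.sum_congr rfl fun t _ => by simp
  have hFbdd : BddBelow F :=
    ⟨-(β * Fintype.card X), fun v hv => by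
      obtain ⟨e, he, rfl⟩ := hv
      exact fullLag_lb p β hβ hpos hsum e he⟩
  have hRbdd : BddBelow R :=
    ⟨-(β * Fintype.card X), fun v hv => by
      obtain ⟨f, hf, rfl⟩ := hv
      exact fullLag_lb (pushJoint p φ) β hβ hpush_nn hpushsum f hf⟩
  -- reduced values are achieved by full encoders
  have hRsubF : R ⊆ F := by
    rintro v ⟨f, hf, rfl⟩
    refine ⟨fun t x => f (φ t) x, ⟨fun t x => hf.1 (φ t) x, fun t => hf.2 (φ t)⟩, ?_⟩
    rw [fullLag, fullLag]
    have h1 : mi (fun t x => (∑ c, p t c) * f (φ t) x)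
        = mi (fun z x => (∑ c, pushJoint p φ z c) * f z x) := by
      rw [mi_factor (fun t => ∑ c, p t c) f φ]
      congr 1
      funext z x
      rw [hMZ z]
    have h2 : (fun c x => ∑ t, p t c * f (φ t) x)
        = fun c x => ∑ z, pushJoint p φ z c * f z x := by
      funext c x
      rw [← regroup φ (fun t => p t c) (fun z => f z x)]
      exact Finset.sum_congr rfl fun z _ => by rw [hpush_def]
    rw [h1, h2]
  -- every full value is dominated by a reduced value
  have hdom : ∀ v ∈ F, ∃ w ∈ R, w ≤ v := by
    rintro v ⟨e, he, rfl⟩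
    set f : Z → X → ℝ := fun z x =>
      if (∑ t, if φ t = z then (∑ c, p t c) else 0) = 0 then (Fintype.card X : ℝ)⁻¹
      else margEnc p φ e x z with hf
    have hfker : IsKernel f := by
      constructor
      · intro z x
        by_cases hz0 : (∑ t, if φ t = z then (∑ c, p t c) else 0) = 0
        · simp only [hf, if_pos hz0]
          positivity
        · simp only [hf, if_neg hz0]
          rw [hmarg]
          apply div_nonneg
          · exact Finset.sum_nonneg fun t _ => by
              split <;> [exact mul_nonneg (hpT_nn t) (he.1 t x); exact le_rfl]
          · exact hMZ_nn z
      · intro z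
        rcases eq_or_ne (∑ t, if φ t = z then (∑ c, p t c) else 0) 0 with h | h
        · simp only [hf, if_pos h]
          rw [Finset.sum_const, nsmul_eq_mul, Finset.card_univ, mul_inv_cancel₀ hcardX.ne']
        · simp only [hf, if_neg h]
          have : ∀ x : X, margEnc p φ e x z
              = (∑ t, if φ t = z then (∑ c, p t c) * e t x else 0)
                / (∑ t, if φ t = z then (∑ c, p t c) else 0) := fun x => hmarg e x z
          rw [Finset.sum_congr rfl fun x _ => this x, ← Finset.sum_div]
          have hnum : ∑ x : X, ∑ t, (if φ t = z then (∑ c, p t c) * e t x else 0)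
              = ∑ t, if φ t = z then (∑ c, p t c) else 0 := by
            rw [Finset.sum_comm]
            refine Finset.sum_congr rfl fun t _ => ?_
            split
            · rw [← Finset.mul_sum, he.2 t, mul_one]
            · simp
          rw [hnum, div_self h]
    refine ⟨fullLag (pushJoint p φ) β f, ⟨f, hfker, rfl⟩, ?_⟩
    have hval : fullLag (pushJoint p φ) β f
        = mi (fun z x => (∑ c, pushJoint p φ z c) * margEnc p φ e x z)
          - β * mi (fun c x => ∑ z, pushJoint p φ z c * margEnc p φ e x z) := by
      rw [fullLag]
      have j1 : (fun z x => (∑ c, pushJoint p φ z c) * f z x)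
          = fun z x => (∑ c, pushJoint p φ z c) * margEnc p φ e x z := by
        funext z x
        by_cases hz0 : (∑ t, if φ t = z then (∑ c, p t c) else 0) = 0
        · simp only [hf, if_pos hz0]
          rw [hMZ z, hz0, zero_mul, zero_mul]
        · simp only [hf, if_neg hz0]
      have j2 : (fun c x => ∑ z, pushJoint p φ z c * f z x)
          = fun c x => ∑ z, pushJoint p φ z c * margEnc p φ e x z := by
        funext c x
        refine Finset.sum_congr rfl fun z _ => ?_
        by_cases hz0 : (∑ t, if φ t = z then (∑ c, p t c) else 0) = 0
        · simp only [hf, if_pos hz0]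
          rw [hpush0 z hz0 c, zero_mul, zero_mul]
        · simp only [hf, if_neg hz0]
      rw [j1, j2]
    rw [hval]
    exact part1 e he
  refine le_antisymm (csInf_le_csInf hFbdd hRne hRsubF) ?_
  apply le_csInf hFne
  intro v hv
  obtain ⟨w, hwR, hwv⟩ := hdom v hv
  exact le_trans (csInf_le hRbdd hwR) hwv
end

section
/- IB curve preservation: if φ is sufficient for C given T, then for every R ≥ 0, sup{I(X;C) : encoders p(X|T) with C ↔ T ↔ X and I(X;T) ≤ R} = sup{I(X;C) : encoders q(X|Z) with C ↔ Z ↔ X and I(X;Z) ≤ R}, where Z = φ(T). -/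
open scoped BigOperators

/- ### Auxiliary lemmas -/

private lemma log_sum_ineq {ι : Type*} (s : Finset ι) (A B : ι → ℝ)
    (hA : ∀ i ∈ s, 0 ≤ A i) (hB : ∀ i ∈ s, 0 ≤ B i)
    (hAB : ∀ i ∈ s, B i = 0 → A i = 0) :
    (∑ i ∈ s, A i) * Real.log ((∑ i ∈ s, A i) / (∑ i ∈ s, B i)) ≤
      ∑ i ∈ s, A i * Real.log (A i / B i) := by
  classical
  set F := s.filter (fun i => B i ≠ 0) with hF
  have hAs : ∑ i ∈ F, A i = ∑ i ∈ s, A i := by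
    refine Finset.sum_filter_of_ne ?_
    intro i hi hAi
    exact fun hBi => hAi (hAB i hi hBi)
  have hBs : ∑ i ∈ F, B i = ∑ i ∈ s, B i := by
    refine Finset.sum_filter_of_ne ?_
    intro i hi hBi
    exact hBi
  have hLs : ∑ i ∈ F, A i * Real.log (A i / B i) = ∑ i ∈ s, A i * Real.log (A i / B i) := by
    refine Finset.sum_filter_of_ne ?_
    intro i hi h
    intro hBi
    exact h (by rw [hAB i hi hBi]; ring)
  rw [← hAs, ← hBs, ← hLs]
  have hBF : ∀ i ∈ F, 0 < B i := by
    intro i hi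
    rw [hF, Finset.mem_filter] at hi
    exact lt_of_le_of_ne (hB i hi.1) (Ne.symm hi.2)
  by_cases hBt : ∑ i ∈ F, B i = 0
  · have : F = ∅ := by
      by_contra h
      obtain ⟨i, hi⟩ := Finset.nonempty_iff_ne_empty.mpr h
      have := Finset.sum_eq_zero_iff_of_nonneg (fun j hj => (hBF j hj).le) |>.mp hBt i hi
      exact (hBF i hi).ne' this
    simp [this]
  · have hBpos : 0 < ∑ i ∈ F, B i :=
      lt_of_le_of_ne (Finset.sum_nonneg fun i hi => (hBF i hi).le) (Ne.symm hBt)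
    have jensen := Real.convexOn_mul_log.map_centerMass_le (t := F) (w := B)
      (p := fun i => A i / B i) (fun i hi => (hBF i hi).le) hBpos
      (fun i hi => div_nonneg (hA i (Finset.mem_filter.mp hi).1) (hBF i hi).le)
    have h1 : F.centerMass B (fun i => A i / B i) = (∑ i ∈ F, A i) / (∑ i ∈ F, B i) := by
      have e1 : ∑ i ∈ F, B i • (A i / B i) = ∑ i ∈ F, A i :=
        Finset.sum_congr rfl (fun i hi => by
          rw [smul_eq_mul, mul_div_cancel₀ _ (hBF i hi).ne'])
      rw [Finset.centerMass, e1, smul_eq_mul, inv_mul_eq_div]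
    have h2 : F.centerMass B ((fun x => x * Real.log x) ∘ fun i => A i / B i) =
        (∑ i ∈ F, B i)⁻¹ * ∑ i ∈ F, A i * Real.log (A i / B i) := by
      have e2 : ∑ i ∈ F, B i • (((fun x => x * Real.log x) ∘ fun i => A i / B i) i) =
          ∑ i ∈ F, A i * Real.log (A i / B i) :=
        Finset.sum_congr rfl (fun i hi => by
          simp only [Function.comp, smul_eq_mul]
          rw [← mul_assoc, mul_div_cancel₀ _ (hBF i hi).ne'])
      rw [Finset.centerMass, e2, smul_eq_mul]
    rw [h1, h2] at jensen
    calc (∑ i ∈ F, A i) * Real.log ((∑ i ∈ F, A i) / (∑ i ∈ F, B i))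
        = (∑ i ∈ F, B i) * ((∑ i ∈ F, A i) / (∑ i ∈ F, B i) *
            Real.log ((∑ i ∈ F, A i) / (∑ i ∈ F, B i))) := by
          field_simp
      _ ≤ (∑ i ∈ F, B i) * ((∑ i ∈ F, B i)⁻¹ * ∑ i ∈ F, A i * Real.log (A i / B i)) :=
          mul_le_mul_of_nonneg_left jensen hBpos.le
      _ = ∑ i ∈ F, A i * Real.log (A i / B i) := by
          field_simp

private lemma sum_sum_ite {T Z : Type*} [Fintype T] [Fintype Z] [DecidableEq Z]
    (φ : T → Z) (g : T → ℝ) :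
    ∑ z, ∑ t, (if φ t = z then g t else 0) = ∑ t, g t := by
  rw [Finset.sum_comm]; simp

private lemma mi_push_le {T Z X : Type*} [Fintype T] [Fintype Z] [Fintype X] [DecidableEq Z]
    (φ : T → Z) (a : T → X → ℝ) (ha : ∀ t x, 0 ≤ a t x) :
    mi (fun z x => ∑ t, if φ t = z then a t x else 0) ≤ mi a := by
  classical
  set colX : X → ℝ := fun x => ∑ t, a t x with hcolX
  set rowA : T → ℝ := fun t => ∑ x, a t x with hrowA
  have hcol : ∀ x, (∑ z, ∑ t, if φ t = z then a t x else 0) = colX x := fun x =>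
    sum_sum_ite φ (fun t => a t x)
  have hrow : ∀ z, (∑ x, ∑ t, if φ t = z then a t x else 0)
      = ∑ t, if φ t = z then rowA t else 0 := by
    intro z
    rw [Finset.sum_comm]
    exact Finset.sum_congr rfl (fun t _ => by
      by_cases h : φ t = z <;> simp [h, hrowA])
  have hmia : mi a = ∑ z, ∑ x, ∑ t, if φ t = z
      then a t x * Real.log (a t x / (rowA t * colX x)) else 0 := by
    unfold mi
    rw [Finset.sum_comm]
    rw [Finset.sum_congr rfl (fun x _ => (sum_sum_ite φ
      (fun t => a t x * Real.log (a t x / (rowA t * colX x)))).symm)]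
    rw [Finset.sum_comm]
  rw [hmia]
  unfold mi
  refine Finset.sum_le_sum (fun z _ => Finset.sum_le_sum (fun x _ => ?_))
  rw [hcol x, hrow z]
  have hBsum : (∑ t, if φ t = z then rowA t else 0) * colX x
      = ∑ t, if φ t = z then rowA t * colX x else 0 := by
    rw [Finset.sum_mul]
    exact Finset.sum_congr rfl (fun t _ => by by_cases h : φ t = z <;> simp [h])
  rw [hBsum]
  have key := log_sum_ineq (Finset.univ : Finset T)
    (fun t => if φ t = z then a t x else 0)
    (fun t => if φ t = z then rowA t * colX x else 0)
    (fun t _ => by by_cases h : φ t = z <;> simp [h, ha t x])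
    (fun t _ => by
      by_cases h : φ t = z <;>
        simp [h, hrowA, hcolX, mul_nonneg (Finset.sum_nonneg fun x' _ => ha t x')
          (Finset.sum_nonneg fun t' _ => ha t' x)])
    (fun t _ => by
      by_cases h : φ t = z
      · simp only [h, if_true]
        intro h0
        rcases mul_eq_zero.mp h0 with h1 | h1
        · have : a t x ≤ rowA t := Finset.single_le_sum (fun x' _ => ha t x') (Finset.mem_univ x)
          have := le_antisymm (h1 ▸ this) (ha t x); linarith
        · have : a t x ≤ colX x := Finset.single_le_sum (fun t' _ => ha t' x) (Finset.mem_univ t)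
          have := le_antisymm (h1 ▸ this) (ha t x); linarith
      · simp [h])
  refine le_trans (le_of_eq ?_) (le_trans key (le_of_eq (Finset.sum_congr rfl fun t _ => ?_)))
  · rfl
  · by_cases h : φ t = z <;> simp [h]

private lemma group_mul {T Z : Type*} [Fintype T] [Fintype Z] [DecidableEq Z]
    (φ : T → Z) (w : T → ℝ) (g : Z → ℝ) :
    ∑ z, (∑ t, if φ t = z then w t else 0) * g z = ∑ t, w t * g (φ t) := by
  rw [← sum_sum_ite φ (fun t => w t * g (φ t))]
  refine Finset.sum_congr rfl (fun z _ => ?_)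
  rw [Finset.sum_mul]
  refine Finset.sum_congr rfl (fun t _ => ?_)
  by_cases h : φ t = z <;> simp [h]

private lemma mi_lift {T Z X : Type*} [Fintype T] [Fintype Z] [Fintype X] [DecidableEq Z]
    (φ : T → Z) (w : T → ℝ) (f : Z → X → ℝ) :
    mi (fun t x => w t * f (φ t) x) =
      mi (fun z x => (∑ t, if φ t = z then w t else 0) * f z x) := by
  classical
  set W : Z → ℝ := fun z => ∑ t, if φ t = z then w t else 0 with hW
  set S : Z → ℝ := fun z => ∑ x, f z x with hS
  set col : X → ℝ := fun x => ∑ z, W z * f z x with hcol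
  have hcolL : ∀ x, (∑ t', w t' * f (φ t') x) = col x := by
    intro x
    rw [hcol]
    exact (group_mul φ w (fun z => f z x)).symm
  set g : Z → X → ℝ := fun z x => f z x * Real.log (f z x / (S z * col x)) with hg
  have hL : mi (fun t x => w t * f (φ t) x) = ∑ x, ∑ t, w t * g (φ t) x := by
    unfold mi
    rw [Finset.sum_comm]
    refine Finset.sum_congr rfl (fun x _ => Finset.sum_congr rfl (fun t _ => ?_))
    rw [hcolL x, ← Finset.mul_sum]
    by_cases hw : w t = 0
    · simp [hw]
    · rw [hg]
      have : w t * f (φ t) x / (w t * S (φ t) * col x)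
          = f (φ t) x / (S (φ t) * col x) := by
        rw [mul_assoc]
        exact mul_div_mul_left _ _ hw
      rw [this, mul_assoc]
  have hR : mi (fun z x => W z * f z x) = ∑ x, ∑ z, W z * g z x := by
    unfold mi
    rw [Finset.sum_comm]
    refine Finset.sum_congr rfl (fun x _ => Finset.sum_congr rfl (fun z _ => ?_))
    rw [← Finset.mul_sum]
    by_cases hw : W z = 0
    · simp [hw]
    · rw [hg]
      have : W z * f z x / (W z * S z * col x) = f z x / (S z * col x) := by
        rw [mul_assoc]
        exact mul_div_mul_left _ _ hw
      rw [this, mul_assoc]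
  rw [hL, hR]
  exact Finset.sum_congr rfl (fun x _ => (group_mul φ w (fun z => g z x)).symm)

/-- IB curve preservation: if `φ` is sufficient for `C` given
`T`, then for every `R ≥ 0`,
`sup{I(X;C) : p(X∣T), I(X;T) ≤ R} = sup{I(X;C) : q(X∣Z), I(X;Z) ≤ R}`
with `Z = φ(T)`. -/
theorem stmt11 {T C Z X : Type*} [Fintype T] [Fintype C] [Fintype Z] [DecidableEq Z]
    [Fintype X] [Nonempty X]
    (φ : T → Z) (p : T → C → ℝ) (R : ℝ) (hR : 0 ≤ R)
    (hpos : ∀ t c, 0 ≤ p t c)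
    (hsum : ∑ t, ∑ c, p t c = 1)
    (hsuff : CondIndep (fun c t z => if φ t = z then p t c else 0)) :
    sSup {v : ℝ | ∃ e : T → X → ℝ, IsKernel e ∧
        mi (fun t x => (∑ c, p t c) * e t x) ≤ R ∧
        v = mi (fun c x => ∑ t, p t c * e t x)} =
      sSup {v : ℝ | ∃ f : Z → X → ℝ, IsKernel f ∧
        mi (fun z x => (∑ c, pushJoint p φ z c) * f z x) ≤ R ∧
        v = mi (fun c x => ∑ z, pushJoint p φ z c * f z x)} := by
  classical
  -- abbreviations
  set Wt : Z → ℝ := fun z => ∑ t, if φ t = z then (∑ c, p t c) else 0 with hWtdef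
  have hWt : ∀ z, (∑ c, pushJoint p φ z c) = Wt z := by
    intro z
    unfold pushJoint
    rw [Finset.sum_comm]
    exact Finset.sum_congr rfl (fun t _ => by by_cases h : φ t = z <;> simp [h])
  have hpT : ∀ t, 0 ≤ ∑ c, p t c := fun t => Finset.sum_nonneg fun c _ => hpos t c
  have hWtnn : ∀ z, 0 ≤ Wt z := fun z => Finset.sum_nonneg fun t _ => by
    by_cases h : φ t = z <;> simp [h, hpT t]
  -- sufficiency identity: p t c * Wt (φ t) = pushJoint (φ t) c * pT t
  have hsuffkey : ∀ t c, p t c * Wt (φ t) = pushJoint p φ (φ t) c * (∑ c', p t c') := by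
    intro t c
    have h := hsuff c t (φ t)
    simp only [if_pos rfl] at h
    have hdd : (∑ c', ∑ t', if φ t' = φ t then p t' c' else 0) = Wt (φ t) := by
      rw [Finset.sum_comm]
      exact Finset.sum_congr rfl (fun t' _ => by
        by_cases h' : φ t' = φ t <;> simp [h'])
    rw [hdd] at h
    exact h
  -- if a fiber has zero mass, every p t c in it vanishes
  have hfiber0 : ∀ z, Wt z = 0 → ∀ t, φ t = z → ∀ c, p t c = 0 := by
    intro z hz t ht c
    have hall := (Finset.sum_eq_zero_iff_of_nonneg (fun t' _ => by
      by_cases h : φ t' = z <;> simp [h, hpT t'])).mp hz t (Finset.mem_univ t)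
    rw [if_pos ht] at hall
    have h1 : p t c ≤ ∑ c', p t c' :=
      Finset.single_le_sum (fun c' _ => hpos t c') (Finset.mem_univ c)
    exact le_antisymm (hall ▸ h1) (hpos t c)
  have hset : {v : ℝ | ∃ e : T → X → ℝ, IsKernel e ∧
        mi (fun t x => (∑ c, p t c) * e t x) ≤ R ∧
        v = mi (fun c x => ∑ t, p t c * e t x)} =
      {v : ℝ | ∃ f : Z → X → ℝ, IsKernel f ∧
        mi (fun z x => (∑ c, pushJoint p φ z c) * f z x) ≤ R ∧
        v = mi (fun c x => ∑ z, pushJoint p φ z c * f z x)} := by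
    ext v
    constructor
    · -- encoder from T: collapse it to Z
      rintro ⟨e, he, hconstr, hval⟩
      set Q : Z → X → ℝ := fun z x => ∑ t, if φ t = z then (∑ c, p t c) * e t x else 0
        with hQdef
      have hQnn : ∀ z x, 0 ≤ Q z x := fun z x => Finset.sum_nonneg fun t _ => by
        by_cases h : φ t = z <;> simp [h, mul_nonneg (hpT t) (he.1 t x)]
      refine ⟨fun z x => if Wt z = 0 then (Fintype.card X : ℝ)⁻¹ else Q z x / Wt z,
        ⟨?_, ?_⟩, ?_, ?_⟩
      · intro z x
        by_cases h : Wt z = 0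
        · simp only [h, if_true]
          positivity
        · simp only [h, if_false]
          exact div_nonneg (hQnn z x) (hWtnn z)
      · intro z
        by_cases h : Wt z = 0
        · simp only [h, if_true]
          rw [Finset.sum_const, Finset.card_univ, nsmul_eq_mul]
          exact mul_inv_cancel₀ (Nat.cast_ne_zero.mpr Fintype.card_ne_zero)
        · simp only [h, if_false]
          rw [← Finset.sum_div]
          have : (∑ x, Q z x) = Wt z := by
            rw [hQdef]
            rw [Finset.sum_comm]
            refine Finset.sum_congr rfl (fun t _ => ?_)
            by_cases h' : φ t = z
            · simp [h', ← Finset.mul_sum, he.2 t]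
            · simp [h']
          rw [this, div_self h]
      · -- the rate constraint
        have hWQ : ∀ z x, Wt z * (if Wt z = 0 then (Fintype.card X : ℝ)⁻¹ else Q z x / Wt z)
            = Q z x := by
          intro z x
          by_cases h : Wt z = 0
          · simp only [h, if_true, zero_mul]
            symm
            refine Finset.sum_eq_zero (fun t _ => ?_)
            by_cases h' : φ t = z
            · have : (∑ c, p t c) = 0 :=
                Finset.sum_eq_zero (fun c _ => hfiber0 z h t h' c)
              simp [h', this]
            · simp [h']
          · simp only [h, if_false]
            exact mul_div_cancel₀ _ h
        have heq : (fun z x => (∑ c, pushJoint p φ z c) *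
            (if Wt z = 0 then (Fintype.card X : ℝ)⁻¹ else Q z x / Wt z)) = Q := by
          funext z x
          rw [hWt z, hWQ z x]
        rw [heq, hQdef]
        exact le_trans (mi_push_le φ (fun t x => (∑ c, p t c) * e t x)
          (fun t x => mul_nonneg (hpT t) (he.1 t x))) hconstr
      · -- the value
        rw [hval]
        congr 1
        funext c x
        rw [← sum_sum_ite φ (fun t => p t c * e t x)]
        refine Finset.sum_congr rfl (fun z _ => ?_)
        by_cases h : Wt z = 0
        · have hpush : pushJoint p φ z c = 0 :=
            Finset.sum_eq_zero (fun t _ => by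
              by_cases h' : φ t = z
              · simp [h', hfiber0 z h t h' c]
              · simp [h'])
          rw [hpush, zero_mul]
          refine Finset.sum_eq_zero (fun t _ => ?_)
          by_cases h' : φ t = z
          · simp [h', hfiber0 z h t h' c]
          · simp [h']
        · simp only [h, if_false]
          have : ∀ t, (if φ t = z then p t c * e t x else 0)
              = (pushJoint p φ z c / Wt z) * (if φ t = z then (∑ c', p t c') * e t x else 0) := by
            intro t
            by_cases h' : φ t = z
            · simp only [h', if_true]
              have hk := hsuffkey t c
              rw [h'] at hk
              have hpc : p t c = pushJoint p φ z c * (∑ c', p t c') / Wt z := by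
                rw [eq_div_iff h]
                exact hk
              rw [hpc]
              ring
            · simp [h']
          rw [Finset.sum_congr rfl (fun t _ => this t), ← Finset.mul_sum]
          rw [div_mul_eq_mul_div, mul_div_assoc]
    · -- encoder from Z: compose with φ
      rintro ⟨f, hf, hconstr, hval⟩
      refine ⟨fun t x => f (φ t) x, ⟨fun t x => hf.1 (φ t) x, fun t => hf.2 (φ t)⟩, ?_, ?_⟩
      · rw [mi_lift φ (fun t => ∑ c, p t c) f]
        have heq : (fun z x => (∑ t, if φ t = z then (∑ c, p t c) else 0) * f z x)
            = (fun z x => (∑ c, pushJoint p φ z c) * f z x) := by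
          funext z x
          rw [hWt z]
        rw [heq]
        exact hconstr
      · rw [hval]
        congr 1
        funext c x
        have : ∀ z, pushJoint p φ z c * f z x
            = (∑ t, if φ t = z then p t c else 0) * f z x := fun z => rfl
        rw [Finset.sum_congr rfl (fun z _ => this z)]
        exact group_mul φ (fun t => p t c) (fun z => f z x)
  rw [hset]
end
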